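/- If R is a commutative ring such that the zero-annihilator graph ZA(R) has no edges (for all distinct nonzero nonunits x, y, Ann_R(x) ∩ Ann_R(y) ≠ {0}), then R is a local ring and every nonunit x ∈ R satisfies Ann_R(x) ≠ {0}. -/

import Mathlib

lemma exists_ne_zero_of_ne_singleton {R : Type*} [CommRing R] {S : Set R}
    (h0 : (0:R) ∈ S) (h : S ≠ {0}) : ∃ r ∈ S, r ≠ 0 := by
  by_contra hc
  push_neg at hc
  exact h (Set.eq_singleton_iff_unique_mem.mpr ⟨h0, hc⟩)

theorem stmt2 {R : Type*} [CommRing R] [Nontrivial R]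
    (h : ∀ x y : R, x ≠ 0 → ¬ IsUnit x → y ≠ 0 → ¬ IsUnit y → x ≠ y →
      {r : R | r * x = 0} ∩ {r : R | r * y = 0} ≠ {0}) :
    IsLocalRing R ∧ ∀ x : R, ¬ IsUnit x → {r : R | r * x = 0} ≠ {0} := by
  constructor
  · apply IsLocalRing.of_isUnit_or_isUnit_one_sub_self
    intro a
    by_contra hc
    push_neg at hc
    obtain ⟨ha, hb⟩ := hc
    have ha0 : a ≠ 0 := by rintro rfl; exact hb (by simp)
    have hb0 : (1 : R) - a ≠ 0 := by
      intro h1; exact ha (by rw [sub_eq_zero] at h1; simp [← h1])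
    have hne : a ≠ 1 - a := by
      intro he
      apply ha
      have : a * 2 = 1 := by linear_combination he
      exact IsUnit.of_mul_eq_one _ this
    obtain ⟨r, hr, hr0⟩ := exists_ne_zero_of_ne_singleton
      (by simp : (0:R) ∈ _) (h a (1 - a) ha0 ha hb0 hb hne)
    obtain ⟨h1, h2⟩ := hr
    apply hr0
    have : r * a + r * (1 - a) = r := by ring
    simp only [Set.mem_setOf_eq] at h1 h2
    rw [h1, h2, add_zero] at this
    exact this.symm
  · intro x hx
    rcases eq_or_ne x 0 with rfl | hx0
    · intro hset
      have : (1:R) ∈ ({r : R | r * 0 = 0} : Set R) := by simp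
      rw [hset] at this
      simp at this
    · -- x nonzero nonunit
      rcases eq_or_ne (x * x) x with hxx | hxx
      · -- (x-1)*x = 0, x - 1 ≠ 0
        intro hset
        have hm : x - 1 ∈ ({r : R | r * x = 0} : Set R) := by
          simp only [Set.mem_setOf_eq]; linear_combination hxx
        rw [hset] at hm
        have : x = 1 := by simpa [sub_eq_zero] using hm
        exact hx (this ▸ isUnit_one)
      · rcases eq_or_ne (x * x) 0 with hxx0 | hxx0
        · intro hset
          have hm : x ∈ ({r : R | r * x = 0} : Set R) := hxx0
          rw [hset] at hm
          exact hx0 hm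
        · have hxxu : ¬ IsUnit (x * x) := fun hu => hx (isUnit_of_mul_isUnit_left hu)
          have := h x (x * x) hx0 hx hxx0 hxxu (Ne.symm hxx)
          obtain ⟨r, hr, hr0⟩ := exists_ne_zero_of_ne_singleton (by simp) this
          intro hset
          have : r ∈ ({r : R | r * x = 0} : Set R) := hr.1
          rw [hset] at this
          exact hr0 this
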